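/- There exists a universal constant C > 0 with the following property. Let r > 0, let N ∈ ℕ, and for each i = 1, …, N let Lᵢ ≥ r, let Qᵢ be an orthogonal 3×3 real matrix, bᵢ ∈ ℝ³, and set Zᵢ = { Qᵢ x + bᵢ : x ∈ C(r, Lᵢ) }, where C(r, L) = { x ∈ ℝ³ : 0 ≤ x₁ ≤ L, x₂² + x₃² ≤ r² }. Put F = Z₁ ∪ … ∪ Z_N and let L = L₁ + … + L_N be the total fibre length. Then for every τ ∈ ℝ³, ∫_{ℝ³} |χ_F(x + τ) − χ_F(x)|² dx ≤ C r L |τ|, where χ_F is the indicator function of F and the integral is with respect to Lebesgue measure; equivalently, the Lebesgue measure of the symmetric difference F Δ (F − τ) is at most C r L |τ|. -/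

import Mathlib

open MeasureTheory Set Matrix

/-- Euclidean norm on `ℝ³` (realized as `Fin 3 → ℝ`). -/
noncomputable def enorm3 (x : Fin 3 → ℝ) : ℝ := Real.sqrt (∑ i, x i ^ 2)

/-- The standard solid cylinder (fibre) of radius `r` and length `L` in `ℝ³`,
with axis along the first coordinate axis. -/
def cyl (r L : ℝ) : Set (Fin 3 → ℝ) :=
  {x | 0 ≤ x 0 ∧ x 0 ≤ L ∧ x 1 ^ 2 + x 2 ^ 2 ≤ r ^ 2}

namespace Stmt5Aux

lemma enorm3_nonneg (x : Fin 3 → ℝ) : 0 ≤ enorm3 x := Real.sqrt_nonneg _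

lemma enorm3_eq (x : Fin 3 → ℝ) :
    enorm3 x = Real.sqrt (x 0 ^ 2 + x 1 ^ 2 + x 2 ^ 2) := by
  rw [enorm3, Fin.sum_univ_three]

lemma abs_coord_le (x : Fin 3 → ℝ) (i : Fin 3) : |x i| ≤ enorm3 x := by
  rw [enorm3, ← Real.sqrt_sq_eq_abs]
  exact Real.sqrt_le_sqrt (Finset.single_le_sum (f := fun j => x j ^ 2)
    (fun j _ => sq_nonneg _) (Finset.mem_univ i))

lemma sqrt12_le (x : Fin 3 → ℝ) :
    Real.sqrt (x 1 ^ 2 + x 2 ^ 2) ≤ enorm3 x := by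
  rw [enorm3_eq]
  exact Real.sqrt_le_sqrt (by nlinarith [sq_nonneg (x 0)])

lemma enorm3_neg (x : Fin 3 → ℝ) : enorm3 (-x) = enorm3 x := by
  simp [enorm3]

lemma ann_ineq {r s a b u v : ℝ} (hr : 0 < r) (hsr : s ≤ r)
    (hs : s = Real.sqrt (u ^ 2 + v ^ 2))
    (h1 : a ^ 2 + b ^ 2 ≤ r ^ 2) (h2 : r ^ 2 < (a - u) ^ 2 + (b - v) ^ 2) :
    (r - s) ^ 2 < a ^ 2 + b ^ 2 := by
  have hs0 : 0 ≤ s := hs ▸ Real.sqrt_nonneg _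
  have hs2 : s ^ 2 = u ^ 2 + v ^ 2 := by rw [hs]; exact Real.sq_sqrt (by positivity)
  set w := Real.sqrt (a ^ 2 + b ^ 2) with hw
  have hw0 : 0 ≤ w := Real.sqrt_nonneg _
  have hw2 : w ^ 2 = a ^ 2 + b ^ 2 := Real.sq_sqrt (by positivity)
  have hcs : (a * u + b * v) ^ 2 ≤ (w * s) ^ 2 := by
    nlinarith [sq_nonneg (a * v - b * u)]
  have h4 : -(w * s) ≤ a * u + b * v := by nlinarith [sq_nonneg (a*u + b*v + w*s), mul_nonneg hw0 hs0]
  have h5 : r < w + s := by nlinarith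
  nlinarith

lemma euc_cb (ρ : ℝ) (hρ : 0 ≤ ρ) :
    volume (Metric.closedBall (0 : EuclideanSpace ℝ (Fin 2)) ρ)
      = ENNReal.ofReal (Real.pi * ρ ^ 2) := by
  rw [EuclideanSpace.volume_closedBall]
  simp only [Fintype.card_fin]
  norm_num
  rw [← ENNReal.ofReal_pow (Real.sqrt_nonneg _), Real.sq_sqrt Real.pi_nonneg, ← ENNReal.ofReal_pow hρ,
    ← ENNReal.ofReal_mul (by positivity), mul_comm]

lemma meas_ann {r s : ℝ} :
    MeasurableSet {z : Fin 2 → ℝ | z 0 ^ 2 + z 1 ^ 2 ≤ r ^ 2 ∧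
      (s ≤ r → (r - s) ^ 2 < z 0 ^ 2 + z 1 ^ 2)} := by
  have hm : Measurable fun z : Fin 2 → ℝ => z 0 ^ 2 + z 1 ^ 2 :=
    ((measurable_pi_apply 0).pow_const 2).add ((measurable_pi_apply 1).pow_const 2)
  refine (measurableSet_le hm measurable_const).inter ?_
  by_cases hsr : s ≤ r
  · simp only [hsr, forall_true_left]
    exact measurableSet_lt measurable_const hm
  · simp only [hsr, false_implies, setOf_true]
    exact MeasurableSet.univ

lemma norm_w (w : EuclideanSpace ℝ (Fin 2)) :
    ‖w‖ = Real.sqrt ((MeasurableEquiv.toLp 2 (Fin 2 → ℝ)).symm w 0 ^ 2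
      + (MeasurableEquiv.toLp 2 (Fin 2 → ℝ)).symm w 1 ^ 2) := by
  rw [EuclideanSpace.norm_eq, Fin.sum_univ_two]
  simp only [Real.norm_eq_abs, sq_abs]
  rfl

lemma area_ann {r s : ℝ} (hr : 0 < r) (hs : 0 ≤ s) :
    volume {z : Fin 2 → ℝ | z 0 ^ 2 + z 1 ^ 2 ≤ r ^ 2 ∧
      (s ≤ r → (r - s) ^ 2 < z 0 ^ 2 + z 1 ^ 2)}
      ≤ ENNReal.ofReal (2 * Real.pi * r * s) := by
  set Ann := {z : Fin 2 → ℝ | z 0 ^ 2 + z 1 ^ 2 ≤ r ^ 2 ∧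
      (s ≤ r → (r - s) ^ 2 < z 0 ^ 2 + z 1 ^ 2)} with hAnn
  have hvol : volume Ann = volume ((MeasurableEquiv.toLp 2 (Fin 2 → ℝ)).symm ⁻¹' Ann) :=
    ((EuclideanSpace.volume_preserving_symm_measurableEquiv_toLp (Fin 2)).measure_preimage
      meas_ann.nullMeasurableSet).symm
  rw [hvol]
  by_cases hsr : s ≤ r
  · have hsub : (MeasurableEquiv.toLp 2 (Fin 2 → ℝ)).symm ⁻¹' Ann ⊆
        Metric.closedBall 0 r \ Metric.closedBall 0 (r - s) := by
      intro w hw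
      obtain ⟨h1, h2⟩ := hw
      have h2' := h2 hsr
      constructor
      · rw [Metric.mem_closedBall, dist_zero_right, norm_w]
        calc Real.sqrt _ ≤ Real.sqrt (r ^ 2) := Real.sqrt_le_sqrt h1
        _ = r := Real.sqrt_sq hr.le
      · rw [Metric.mem_closedBall, dist_zero_right, not_le]
        have h3 : (r - s) ^ 2 < ‖w‖ ^ 2 := by
          rw [norm_w, Real.sq_sqrt (by positivity)]; exact h2'
        exact lt_of_pow_lt_pow_left₀ 2 (norm_nonneg w) h3
    refine (measure_mono hsub).trans ?_
    rw [measure_diff (Metric.closedBall_subset_closedBall (by linarith))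
      measurableSet_closedBall.nullMeasurableSet
      (by rw [euc_cb _ (by linarith : (0:ℝ) ≤ r - s)]; exact ENNReal.ofReal_ne_top)]
    rw [euc_cb r hr.le, euc_cb _ (by linarith : (0:ℝ) ≤ r - s),
      ← ENNReal.ofReal_sub _ (by positivity)]
    refine ENNReal.ofReal_le_ofReal ?_
    nlinarith [mul_nonneg Real.pi_nonneg (sq_nonneg s)]
  · push_neg at hsr
    have hsub : (MeasurableEquiv.toLp 2 (Fin 2 → ℝ)).symm ⁻¹' Ann ⊆
        Metric.closedBall 0 r := by
      intro w hw
      rw [Metric.mem_closedBall, dist_zero_right, norm_w]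
      calc Real.sqrt _ ≤ Real.sqrt (r ^ 2) := Real.sqrt_le_sqrt hw.1
      _ = r := Real.sqrt_sq hr.le
    refine (measure_mono hsub).trans ?_
    rw [euc_cb r hr.le]
    refine ENNReal.ofReal_le_ofReal ?_
    nlinarith [mul_nonneg (mul_nonneg Real.pi_nonneg hr.le) hs,
      mul_nonneg (mul_nonneg Real.pi_nonneg hr.le) (sub_pos.mpr hsr).le]

lemma vol_box (A B C : Set ℝ) :
    volume {y : Fin 3 → ℝ | y 0 ∈ A ∧ y 1 ∈ B ∧ y 2 ∈ C}
      = volume A * volume B * volume C := by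
  have h : {y : Fin 3 → ℝ | y 0 ∈ A ∧ y 1 ∈ B ∧ y 2 ∈ C}
      = Set.pi Set.univ ![A, B, C] := by
    ext y
    simp only [Set.mem_setOf_eq, Set.mem_univ_pi]
    constructor
    · rintro ⟨h0, h1, h2⟩ i
      fin_cases i <;> simpa
    · intro h
      exact ⟨by simpa using h 0, by simpa using h 1, by simpa using h 2⟩
  rw [h, volume_pi_pi, Fin.prod_univ_three]
  simp [mul_assoc]

lemma vol_slab (L : ℝ) (Ann : Set (Fin 2 → ℝ)) (hA : MeasurableSet Ann) :
    volume ((MeasurableEquiv.piFinSuccAbove (fun _ : Fin 3 => ℝ) 0) ⁻¹' (Set.Icc 0 L ×ˢ Ann))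
      = ENNReal.ofReal L * volume Ann := by
  rw [(volume_preserving_piFinSuccAbove (fun _ : Fin 3 => ℝ) 0).measure_preimage
    ((measurableSet_Icc.prod hA).nullMeasurableSet)]
  rw [Measure.volume_eq_prod, Measure.prod_prod, Real.volume_Icc, sub_zero]

lemma core {r L : ℝ} (hr : 0 < r) (hrL : r ≤ L) (t : Fin 3 → ℝ) :
    volume {y : Fin 3 → ℝ | y ∈ cyl r L ∧ y - t ∉ cyl r L}
      ≤ ENNReal.ofReal (16 * (r * (L * enorm3 t))) := by
  set s0 := |t 0| with hs0def
  set s := Real.sqrt (t 1 ^ 2 + t 2 ^ 2) with hsdef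
  set nt := enorm3 t with hntdef
  have hs00 : 0 ≤ s0 := abs_nonneg _
  have hs0nt : s0 ≤ nt := abs_coord_le t 0
  have hsn : 0 ≤ s := Real.sqrt_nonneg _
  have hsnt : s ≤ nt := sqrt12_le t
  have hnt : 0 ≤ nt := enorm3_nonneg t
  have hL0 : 0 ≤ L := hr.le.trans hrL
  set E1 := {y : Fin 3 → ℝ | y 0 ∈ Icc 0 s0 ∧ y 1 ∈ Icc (-r) r ∧ y 2 ∈ Icc (-r) r} with hE1
  set E2 := {y : Fin 3 → ℝ | y 0 ∈ Icc (L - s0) L ∧ y 1 ∈ Icc (-r) r ∧ y 2 ∈ Icc (-r) r} with hE2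
  set Ann := {z : Fin 2 → ℝ | z 0 ^ 2 + z 1 ^ 2 ≤ r ^ 2 ∧
      (s ≤ r → (r - s) ^ 2 < z 0 ^ 2 + z 1 ^ 2)} with hAnn
  set E3 := (MeasurableEquiv.piFinSuccAbove (fun _ : Fin 3 => ℝ) 0) ⁻¹' (Set.Icc 0 L ×ˢ Ann)
    with hE3
  have hsub : {y : Fin 3 → ℝ | y ∈ cyl r L ∧ y - t ∉ cyl r L} ⊆ E1 ∪ E2 ∪ E3 := by
    rintro y ⟨hy, hny⟩
    obtain ⟨h0, hL', hdisk⟩ := hy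
    have hy1 : y 1 ∈ Icc (-r) r :=
      ⟨by nlinarith [sq_nonneg (y 1 + r), sq_nonneg (y 2)],
       by nlinarith [sq_nonneg (y 1 - r), sq_nonneg (y 2)]⟩
    have hy2 : y 2 ∈ Icc (-r) r :=
      ⟨by nlinarith [sq_nonneg (y 2 + r), sq_nonneg (y 1)],
       by nlinarith [sq_nonneg (y 2 - r), sq_nonneg (y 1)]⟩
    simp only [cyl, Set.mem_setOf_eq, Pi.sub_apply, not_and, not_le] at hny
    by_cases hc1 : y 0 - t 0 < 0
    · left; left
      exact ⟨⟨h0, by have := le_abs_self (t 0); rw [hs0def]; linarith⟩, hy1, hy2⟩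
    push_neg at hc1
    by_cases hc2 : L < y 0 - t 0
    · left; right
      refine ⟨⟨?_, hL'⟩, hy1, hy2⟩
      have := neg_abs_le (t 0); rw [hs0def]; linarith
    push_neg at hc2
    have hc3 : r ^ 2 < (y 1 - t 1) ^ 2 + (y 2 - t 2) ^ 2 := by
      by_contra hc
      push_neg at hc
      exact absurd (hny (by linarith) (by linarith)) (not_lt.mpr hc)
    right
    refine Set.mem_preimage.mpr ⟨⟨h0, hL'⟩, ?_⟩
    exact ⟨hdisk, fun hsr => ann_ineq hr hsr hsdef hdisk hc3⟩
  refine (measure_mono hsub).trans ?_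
  refine (measure_union_le _ _).trans ?_
  refine ((add_le_add_left (measure_union_le _ _) _).trans ?_)
  have hb1 : volume E1 ≤ ENNReal.ofReal (4 * (r * (L * nt))) := by
    rw [hE1, vol_box, Real.volume_Icc, Real.volume_Icc, sub_zero,
      ← ENNReal.ofReal_mul hs00,
      ← ENNReal.ofReal_mul (mul_nonneg hs00 (by linarith : (0:ℝ) ≤ r - -r))]
    refine ENNReal.ofReal_le_ofReal ?_
    nlinarith [mul_le_mul_of_nonneg_left hrL (mul_nonneg hr.le hs00),
      mul_le_mul_of_nonneg_left hs0nt (mul_nonneg hr.le hL0)]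
  have hb2 : volume E2 ≤ ENNReal.ofReal (4 * (r * (L * nt))) := by
    rw [hE2, vol_box, Real.volume_Icc, Real.volume_Icc,
      show L - (L - s0) = s0 by ring,
      ← ENNReal.ofReal_mul hs00,
      ← ENNReal.ofReal_mul (mul_nonneg hs00 (by linarith : (0:ℝ) ≤ r - -r))]
    refine ENNReal.ofReal_le_ofReal ?_
    nlinarith [mul_le_mul_of_nonneg_left hrL (mul_nonneg hr.le hs00),
      mul_le_mul_of_nonneg_left hs0nt (mul_nonneg hr.le hL0)]
  have hb3 : volume E3 ≤ ENNReal.ofReal (8 * (r * (L * nt))) := by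
    rw [hE3, vol_slab _ _ meas_ann]
    calc ENNReal.ofReal L * volume Ann
        ≤ ENNReal.ofReal L * ENNReal.ofReal (2 * Real.pi * r * s) := by
          exact mul_le_mul_right (area_ann hr hsn) _
      _ = ENNReal.ofReal (L * (2 * Real.pi * r * s)) := by
          rw [← ENNReal.ofReal_mul hL0]
      _ ≤ ENNReal.ofReal (8 * (r * (L * nt))) := by
          refine ENNReal.ofReal_le_ofReal ?_
          have hpi : Real.pi ≤ 4 := Real.pi_le_four
          nlinarith [Real.pi_pos, mul_nonneg hr.le hL0,
            mul_nonneg (mul_nonneg hr.le hL0) (sub_nonneg.mpr hsnt),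
            mul_nonneg (mul_nonneg hr.le hL0) hsn]
    done
  calc volume E1 + volume E2 + volume E3
      ≤ ENNReal.ofReal (4 * (r * (L * nt))) + ENNReal.ofReal (4 * (r * (L * nt)))
        + ENNReal.ofReal (8 * (r * (L * nt))) := by
        exact add_le_add (add_le_add hb1 hb2) hb3
    _ = ENNReal.ofReal (16 * (r * (L * nt))) := by
        rw [← ENNReal.ofReal_add (by positivity) (by positivity),
          ← ENNReal.ofReal_add (by positivity) (by positivity)]
        ring_nf

lemma measurableSet_cyl {r L : ℝ} : MeasurableSet (cyl r L) := by
  have h1 : Measurable fun x : Fin 3 → ℝ => x 0 := measurable_pi_apply 0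
  have h2 : Measurable fun x : Fin 3 → ℝ => x 1 ^ 2 + x 2 ^ 2 :=
    ((measurable_pi_apply 1).pow_const 2).add ((measurable_pi_apply 2).pow_const 2)
  exact ((measurableSet_le measurable_const h1).inter
    ((measurableSet_le h1 measurable_const).inter
      (measurableSet_le h2 measurable_const)))

lemma abs_det_orth {Q : Matrix (Fin 3) (Fin 3) ℝ} (hQ : Qᵀ * Q = 1) : |Q.det| = 1 := by
  have h : Q.det ^ 2 = 1 := by
    have := congrArg Matrix.det hQ
    rwa [Matrix.det_mul, Matrix.det_transpose, Matrix.det_one, ← sq] at this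
  have := abs_nonneg Q.det
  nlinarith [sq_abs Q.det]

lemma enorm3_mulVec_transpose {Q : Matrix (Fin 3) (Fin 3) ℝ} (hQ : Qᵀ * Q = 1)
    (τ : Fin 3 → ℝ) : enorm3 (Qᵀ.mulVec τ) = enorm3 τ := by
  have hQQ : Q * Qᵀ = 1 := mul_eq_one_comm.mp hQ
  have key : ∀ v : Fin 3 → ℝ, ∑ i, v i ^ 2 = v ⬝ᵥ v := by
    intro v; simp [dotProduct, sq]
  rw [enorm3, enorm3, key, key]
  congr 1
  rw [Matrix.dotProduct_mulVec, Matrix.vecMul_transpose, Matrix.mulVec_mulVec, hQQ,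
    Matrix.one_mulVec]

lemma image_eq_preimage {Q : Matrix (Fin 3) (Fin 3) ℝ} (hQ : Qᵀ * Q = 1) (b : Fin 3 → ℝ)
    (A : Set (Fin 3 → ℝ)) :
    (fun y => Q.mulVec y + b) '' A = (fun x => Qᵀ.mulVec (x - b)) ⁻¹' A := by
  have hQQ : Q * Qᵀ = 1 := mul_eq_one_comm.mp hQ
  ext x
  simp only [Set.mem_image, Set.mem_preimage]
  constructor
  · rintro ⟨y, hy, rfl⟩
    rwa [add_sub_cancel_right, Matrix.mulVec_mulVec, hQ, Matrix.one_mulVec]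
  · intro h
    exact ⟨Qᵀ.mulVec (x - b), h, by
      rw [Matrix.mulVec_mulVec, hQQ, Matrix.one_mulVec, sub_add_cancel]⟩

lemma vol_preimage_h {Q : Matrix (Fin 3) (Fin 3) ℝ} (hQ : Qᵀ * Q = 1) (b : Fin 3 → ℝ)
    (W : Set (Fin 3 → ℝ)) :
    volume ((fun x => Qᵀ.mulVec (x - b)) ⁻¹' W) = volume W := by
  have hdet : LinearMap.det (Matrix.toLin' Qᵀ) ≠ 0 := by
    rw [LinearMap.det_toLin', Matrix.det_transpose]
    intro h
    have := abs_det_orth hQ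
    rw [h] at this; norm_num at this
  have hsplit : (fun x => Qᵀ.mulVec (x - b)) ⁻¹' W
      = (fun x => x + (-b)) ⁻¹' (Matrix.toLin' Qᵀ ⁻¹' W) := by
    ext x
    simp [Matrix.toLin'_apply, sub_eq_add_neg]
  rw [hsplit, measure_preimage_add_right, Measure.addHaar_preimage_linearMap volume hdet,
    LinearMap.det_toLin', Matrix.det_transpose]
  have : |(Q.det)⁻¹| = 1 := by rw [abs_inv, abs_det_orth hQ]; norm_num
  rw [this]
  simp

lemma fibre_bound {r L : ℝ} (hr : 0 < r) (hrL : r ≤ L)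
    {Q : Matrix (Fin 3) (Fin 3) ℝ} (hQ : Qᵀ * Q = 1) (b τ : Fin 3 → ℝ) :
    volume (({x | x + τ ∈ (fun y => Q.mulVec y + b) '' cyl r L}
        \ (fun y => Q.mulVec y + b) '' cyl r L)
      ∪ ((fun y => Q.mulVec y + b) '' cyl r L
        \ {x | x + τ ∈ (fun y => Q.mulVec y + b) '' cyl r L}))
      ≤ ENNReal.ofReal (32 * (r * (L * enorm3 τ))) := by
  set t := Qᵀ.mulVec τ with ht
  set C := cyl r L with hC
  rw [image_eq_preimage hQ]
  set h : (Fin 3 → ℝ) → (Fin 3 → ℝ) := fun x => Qᵀ.mulVec (x - b) with hh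
  have hpre : {x | x + τ ∈ h ⁻¹' C} = h ⁻¹' {y | y + t ∈ C} := by
    ext x
    simp only [Set.mem_setOf_eq, Set.mem_preimage, hh]
    have : Qᵀ.mulVec (x + τ - b) = Qᵀ.mulVec (x - b) + t := by
      rw [ht, ← Matrix.mulVec_add]
      congr 1
      abel
    rw [this]
  rw [hpre, ← Set.preimage_diff, ← Set.preimage_diff, ← Set.preimage_union, vol_preimage_h hQ]
  have h1 : {y | y + t ∈ C} \ C = (fun x => x + t) ⁻¹' {y | y ∈ C ∧ y - t ∉ C} := by
    ext x
    simp only [Set.mem_diff, Set.mem_setOf_eq, Set.mem_preimage, add_sub_cancel_right]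
  have h2 : C \ {y | y + t ∈ C} = {y | y ∈ C ∧ y - (-t) ∉ C} := by
    ext x
    simp only [Set.mem_diff, Set.mem_setOf_eq, sub_neg_eq_add]
  refine (measure_union_le _ _).trans ?_
  rw [h1, h2, measure_preimage_add_right]
  have hb1 := core hr hrL t
  have hb2 := core hr hrL (-t)
  rw [enorm3_neg] at hb2
  refine (add_le_add hb1 hb2).trans ?_
  have hnn : 0 ≤ 16 * (r * (L * enorm3 t)) :=
    mul_nonneg (by norm_num)
      (mul_nonneg hr.le (mul_nonneg (hr.le.trans hrL) (enorm3_nonneg t)))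
  rw [← ENNReal.ofReal_add hnn hnn, enorm3_mulVec_transpose hQ]
  refine ENNReal.ofReal_le_ofReal (le_of_eq ?_)
  ring

end Stmt5Aux

open Stmt5Aux in
/-- L²-modulus of continuity under translation of the characteristic function of a
fibre system: a universal constant `C > 0` such that for any finite union `F` of rigidly
moved cylinders of radius `r` and lengths `Lᵢ ≥ r`,
`∫ |χ_F(x+τ) − χ_F(x)|² dx ≤ C r L |τ|`, with `L` the total fibre length. -/
theorem stmt_5 :
    ∃ C : ℝ, 0 < C ∧
      ∀ (r : ℝ), 0 < r → ∀ (N : ℕ) (L : Fin N → ℝ), (∀ i, r ≤ L i) →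
        ∀ (Q : Fin N → Matrix (Fin 3) (Fin 3) ℝ), (∀ i, (Q i)ᵀ * Q i = 1) →
          ∀ (b : Fin N → (Fin 3 → ℝ)) (τ : Fin 3 → ℝ),
            (∫ x : Fin 3 → ℝ,
                |Set.indicator (⋃ i, (fun y => (Q i).mulVec y + b i) '' cyl r (L i))
                    (fun _ => (1 : ℝ)) (x + τ) -
                  Set.indicator (⋃ i, (fun y => (Q i).mulVec y + b i) '' cyl r (L i))
                    (fun _ => (1 : ℝ)) x| ^ 2) ≤
              C * r * (∑ i, L i) * enorm3 τ := by
  refine ⟨32, by norm_num, ?_⟩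
  intro r hr N L hL Q hQ b τ
  set Z : Fin N → Set (Fin 3 → ℝ) := fun i => (fun y => (Q i).mulVec y + b i) '' cyl r (L i)
    with hZ
  set F : Set (Fin 3 → ℝ) := ⋃ i, Z i with hF
  have hZmeas : ∀ i, MeasurableSet (Z i) := by
    intro i
    simp only [hZ]
    rw [image_eq_preimage (hQ i)]
    have hcont : Continuous fun x : Fin 3 → ℝ => (Q i)ᵀ.mulVec (x - b i) := by
      have h1 : Continuous (Matrix.toLin' (Q i)ᵀ) := LinearMap.continuous_of_finiteDimensional _
      have h2 : Continuous fun x : Fin 3 → ℝ => x - b i :=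
        continuous_id.sub continuous_const
      exact h1.comp h2
    exact measurableSet_cyl.preimage hcont.measurable
  have hFmeas : MeasurableSet F := MeasurableSet.iUnion hZmeas
  set G : Set (Fin 3 → ℝ) := ({x | x + τ ∈ F} \ F) ∪ (F \ {x | x + τ ∈ F}) with hG
  have hpreFmeas : MeasurableSet {x : Fin 3 → ℝ | x + τ ∈ F} :=
    hFmeas.preimage (measurable_id.add_const τ)
  have hGmeas : MeasurableSet G := (hpreFmeas.diff hFmeas).union (hFmeas.diff hpreFmeas)
  have hpoint : ∀ x : Fin 3 → ℝ,
      |Set.indicator F (fun _ => (1 : ℝ)) (x + τ) - Set.indicator F (fun _ => (1 : ℝ)) x| ^ 2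
        = Set.indicator G (fun _ => (1 : ℝ)) x := by
    intro x
    by_cases h1 : x + τ ∈ F <;> by_cases h2 : x ∈ F <;>
      simp [hG, Set.indicator_apply, h1, h2]
  have hI : (∫ x : Fin 3 → ℝ,
      |Set.indicator F (fun _ => (1 : ℝ)) (x + τ) - Set.indicator F (fun _ => (1 : ℝ)) x| ^ 2)
      = (volume G).toReal := by
    calc (∫ x : Fin 3 → ℝ, |Set.indicator F (fun _ => (1 : ℝ)) (x + τ)
          - Set.indicator F (fun _ => (1 : ℝ)) x| ^ 2)
        = ∫ x : Fin 3 → ℝ, Set.indicator G (fun _ => (1 : ℝ)) x := by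
          exact integral_congr_ae (Filter.Eventually.of_forall hpoint)
      _ = (volume G).toReal • (1 : ℝ) := integral_indicator_const (1 : ℝ) hGmeas
      _ = (volume G).toReal := by rw [smul_eq_mul, mul_one]
  rw [hI]
  -- bound the measure of G
  set Gi : Fin N → Set (Fin 3 → ℝ) := fun i =>
    ({x | x + τ ∈ Z i} \ Z i) ∪ (Z i \ {x | x + τ ∈ Z i}) with hGi
  have hsub : G ⊆ ⋃ i, Gi i := by
    rintro x (⟨hin, hout⟩ | ⟨hin, hout⟩)
    · obtain ⟨i, hi⟩ := Set.mem_iUnion.mp hin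
      exact Set.mem_iUnion.mpr ⟨i, Or.inl ⟨hi, fun hc => hout (Set.mem_iUnion.mpr ⟨i, hc⟩)⟩⟩
    · obtain ⟨i, hi⟩ := Set.mem_iUnion.mp hin
      exact Set.mem_iUnion.mpr ⟨i, Or.inr ⟨hi, fun hc => hout (Set.mem_iUnion.mpr ⟨i, hc⟩)⟩⟩
  have hvolG : volume G ≤ ENNReal.ofReal (32 * r * (∑ i, L i) * enorm3 τ) := by
    refine (measure_mono hsub).trans ((measure_iUnion_le _).trans ?_)
    rw [tsum_fintype]
    calc ∑ i, volume (Gi i)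
        ≤ ∑ i, ENNReal.ofReal (32 * (r * (L i * enorm3 τ))) :=
          Finset.sum_le_sum fun i _ => fibre_bound hr (hL i) (hQ i) (b i) τ
      _ = ENNReal.ofReal (∑ i, 32 * (r * (L i * enorm3 τ))) := by
          rw [ENNReal.ofReal_sum_of_nonneg]
          intro i _
          exact mul_nonneg (by norm_num)
            (mul_nonneg hr.le (mul_nonneg (hr.le.trans (hL i)) (enorm3_nonneg τ)))
      _ = ENNReal.ofReal (32 * r * (∑ i, L i) * enorm3 τ) := by
          congr 1
          calc ∑ i, 32 * (r * (L i * enorm3 τ))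
              = ∑ i, (32 * r * enorm3 τ) * L i :=
                Finset.sum_congr rfl fun i _ => by ring
            _ = (32 * r * enorm3 τ) * ∑ i, L i := (Finset.mul_sum _ _ _).symm
            _ = 32 * r * (∑ i, L i) * enorm3 τ := by ring
  have hRHS : 0 ≤ 32 * r * (∑ i, L i) * enorm3 τ := by
    refine mul_nonneg (mul_nonneg (mul_nonneg (by norm_num) hr.le) ?_) (enorm3_nonneg τ)
    exact Finset.sum_nonneg fun i _ => hr.le.trans (hL i)
  exact ENNReal.toReal_le_of_le_ofReal hRHS hvolG
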